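/- arXiv:1408.3350 — 2 statements merged into one kernel-verified Lean document; each statement's English description precedes it below -/
import Mathlib

section
/- Let d ≥ 1 and let n = (n_1,…,n_d) and m = (m_1,…,m_d) be tuples of integers satisfying: −d ≤ n_1 ≤ … ≤ n_d, 0 ≤ m_1 ≤ … ≤ m_d, n_{i+1} − n_i ≤ 1 and m_{i+1} − m_i ≤ 1 for all 1 ≤ i ≤ d−1. Then d² + Σ_{i=1}^{d}(m_i + n_i) ≥ 0. Moreover, if d² + Σ_{i=1}^{d}(m_i + n_i) > 0, then at least one of the following holds: (i) there exists 1 ≤ i_0 ≤ d such that the tuple m' obtained from m by replacing m_{i_0} with m_{i_0} − 1 still satisfies all the above constraints; or (ii) there exists 1 ≤ i_0 ≤ d such that the tuple n' obtained from n by replacing n_{i_0} with n_{i_0} − 1 still satisfies all the above constraints. -/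
/-- A tuple (b_1,…,b_d) satisfies the constraints with lower bound `lo`:
lo ≤ b_1, b_i ≤ b_{i+1} and b_{i+1} − b_i ≤ 1 for 1 ≤ i ≤ d−1. -/
def OkTuple (d : ℕ) (lo : ℤ) (b : ℕ → ℤ) : Prop :=
  lo ≤ b 1 ∧ ∀ i, 1 ≤ i → i < d → b i ≤ b (i + 1) ∧ b (i + 1) - b i ≤ 1

lemma okTuple_lo_le {d : ℕ} {lo : ℤ} {b : ℕ → ℤ} (h : OkTuple d lo b) :
    ∀ i, 1 ≤ i → i ≤ d → lo ≤ b i := by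
  intro i h1 h2
  induction i with
  | zero => omega
  | succ k ih =>
    rcases Nat.lt_or_ge k 1 with hk | hk
    · have : k = 0 := by omega
      subst this; exact h.1
    · have h3 : lo ≤ b k := ih hk (by omega)
      have h4 := (h.2 k hk (by omega)).1
      linarith

lemma decrease_or_const {d : ℕ} {lo : ℤ} {b : ℕ → ℤ} (hd : 1 ≤ d) (h : OkTuple d lo b) :
    (∃ i0, 1 ≤ i0 ∧ i0 ≤ d ∧ OkTuple d lo (Function.update b i0 (b i0 - 1))) ∨
    (∀ i, 1 ≤ i → i ≤ d → b i = lo) := by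
  classical
  set S := (Finset.Icc 1 d).filter
    (fun i => (i = 1 ∧ lo < b 1) ∨ (2 ≤ i ∧ b (i - 1) < b i)) with hS
  by_cases hne : S.Nonempty
  · left
    set i0 := S.max' hne with hi0
    have hmem : i0 ∈ S := S.max'_mem hne
    have hmax : ∀ j ∈ S, j ≤ i0 := fun j hj => S.le_max' j hj
    rw [hS, Finset.mem_filter, Finset.mem_Icc] at hmem
    obtain ⟨⟨h1, h2⟩, hjump⟩ := hmem
    -- key: if i0 < d then b (i0+1) ≤ b i0
    have hnext : i0 < d → b (i0 + 1) ≤ b i0 := by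
      intro hlt
      by_contra hc
      push_neg at hc
      have : i0 + 1 ∈ S := by
        rw [hS, Finset.mem_filter, Finset.mem_Icc]
        refine ⟨⟨by omega, by omega⟩, Or.inr ⟨by omega, ?_⟩⟩
        simpa using hc
      have := hmax _ this
      omega
    refine ⟨i0, h1, h2, ?_, ?_⟩
    · -- lower bound
      by_cases he : i0 = 1
      · rw [he, Function.update_self]
        rcases hjump with ⟨_, hb⟩ | ⟨hge, _⟩
        · omega
        · omega
      · rw [Function.update_of_ne (Ne.symm he)]
        exact h.1
    · intro i hi1 hid
      have horig := h.2 i hi1 hid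
      by_cases hcase1 : i + 1 = i0
      · -- the pair below the decreased entry
        have hne' : i ≠ i0 := by omega
        rw [Function.update_of_ne hne', hcase1, Function.update_self]
        rcases hjump with ⟨he1, _⟩ | ⟨_, hb⟩
        · omega
        · have heq : i0 - 1 = i := by omega
          rw [heq] at hb
          rw [hcase1] at horig
          omega
      · by_cases hcase2 : i = i0
        · rw [hcase2, Function.update_self, Function.update_of_ne (by omega : i0 + 1 ≠ i0)]
          have hle := hnext (by omega)
          rw [hcase2] at horig
          constructor <;> linarith [horig.1]
        · rw [Function.update_of_ne hcase2, Function.update_of_ne (by omega : i + 1 ≠ i0)]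
          exact horig
  · right
    intro i h1 h2
    induction i with
    | zero => omega
    | succ k ih =>
      have hnot : k + 1 ∉ S := fun hc => hne ⟨k + 1, hc⟩
      rw [hS, Finset.mem_filter, Finset.mem_Icc] at hnot
      rcases Nat.lt_or_ge k 1 with hk | hk
      · have hk0 : k = 0 := by omega
        subst hk0
        have hle : b 1 ≤ lo := by
          by_contra hc
          push_neg at hc
          exact hnot ⟨⟨by omega, h2⟩, Or.inl ⟨rfl, hc⟩⟩
        have h0 := h.1
        show b 1 = lo
        omega
      · have hb : b (k + 1) ≤ b k := by
          by_contra hc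
          push_neg at hc
          refine hnot ⟨⟨by omega, h2⟩, Or.inr ⟨by omega, ?_⟩⟩
          have heq : (k + 1) - 1 = k := by omega
          rw [heq]; exact hc
        have hmono := (h.2 k hk (by omega)).1
        have := ih (by omega) (by omega)
        omega

/-- d² + Σ(m_i + n_i) ≥ 0, and if > 0 then some m_{i_0} or some
n_{i_0} can be decreased by 1 keeping all constraints. -/
theorem stmt_6 (d : ℕ) (hd : 1 ≤ d) (n m : ℕ → ℤ)
    (hn : OkTuple d (-(d : ℤ)) n) (hm : OkTuple d 0 m) :
    0 ≤ (d : ℤ) ^ 2 + ∑ i ∈ Finset.Icc 1 d, (m i + n i) ∧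
    (0 < (d : ℤ) ^ 2 + ∑ i ∈ Finset.Icc 1 d, (m i + n i) →
      (∃ i0, 1 ≤ i0 ∧ i0 ≤ d ∧ OkTuple d 0 (Function.update m i0 (m i0 - 1))) ∨
      (∃ i0, 1 ≤ i0 ∧ i0 ≤ d ∧
        OkTuple d (-(d : ℤ)) (Function.update n i0 (n i0 - 1)))) := by
  have hcard : (Finset.Icc 1 d).card = d := by
    rw [Nat.card_Icc]; omega
  have hmlo := okTuple_lo_le hm
  have hnlo := okTuple_lo_le hn
  have hsum : ∑ i ∈ Finset.Icc 1 d, (-(d : ℤ)) ≤ ∑ i ∈ Finset.Icc 1 d, (m i + n i) := by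
    apply Finset.sum_le_sum
    intro i hi
    rw [Finset.mem_Icc] at hi
    have := hmlo i hi.1 hi.2
    have := hnlo i hi.1 hi.2
    linarith
  rw [Finset.sum_const, hcard, nsmul_eq_mul] at hsum
  constructor
  · nlinarith [hsum]
  · intro hpos
    rcases decrease_or_const hd hm with hdm | hcm
    · exact Or.inl hdm
    rcases decrease_or_const hd hn with hdn | hcn
    · exact Or.inr hdn
    exfalso
    have hsum0 : ∑ i ∈ Finset.Icc 1 d, (m i + n i) = ∑ i ∈ Finset.Icc 1 d, (-(d : ℤ)) := by
      apply Finset.sum_congr rfl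
      intro i hi
      rw [Finset.mem_Icc] at hi
      rw [hcm i hi.1 hi.2, hcn i hi.1 hi.2]
      ring
    rw [hsum0, Finset.sum_const, hcard, nsmul_eq_mul] at hpos
    nlinarith [hpos]
end

section
/- Let 𝔽_q be a finite field, j ≥ 1, and P_j = ∏_{(a_0,…,a_{j−1}) ∈ 𝔽_q^j} (X_j + a_{j−1}X_{j−1} + … + a_1X_1 + a_0) ∈ 𝔽_q[X_1,…,X_j]. Then for any nonzero scalars c_1,…,c_j ∈ 𝔽_q^×, we have P_j(c_1X_1, …, c_jX_j) = c_j · P_j(X_1,…,X_j). -/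
open MvPolynomial

/-- with j = m+1 variables (variable `i : Fin (m+1)` standing for
X_{i+1}), for nonzero scalars c_1,…,c_j one has
P_j(c_1X_1,…,c_jX_j) = c_j · P_j. -/
theorem stmt_10 (F : Type) [Field F] [Fintype F] (m : ℕ)
    (c : Fin (m + 1) → F) (hc : ∀ v, c v ≠ 0) :
    let P : MvPolynomial (Fin (m + 1)) F :=
      ∏ a : Fin (m + 1) → F,
        (X (Fin.last m) + ∑ i : Fin m, C (a i.succ) * X i.castSucc + C (a 0))
    MvPolynomial.bind₁ (fun v : Fin (m + 1) => C (c v) * X v) P =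
      C (c (Fin.last m)) * P := by
  intro P
  set cl := c (Fin.last m) with hcl
  have hq : cl ≠ 0 := hc _
  set d : Fin (m+1) → F := Fin.cases cl⁻¹ (fun i => c i.castSucc * cl⁻¹) with hdd
  have hd : ∀ v, d v ≠ 0 := by
    intro v
    induction v using Fin.cases with
    | zero => simp [hdd, hq]
    | succ i => simp [hdd, hq, hc]
  let φ : (Fin (m+1) → F) ≃ (Fin (m+1) → F) :=
    Equiv.piCongrRight (fun v => Equiv.mulRight₀ (d v) (hd v))
  have hφ : ∀ a v, φ a v = a v * d v := fun a v => rfl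
  have key : ∀ a : Fin (m+1) → F,
      MvPolynomial.bind₁ (fun v : Fin (m + 1) => C (c v) * X v)
        (X (Fin.last m) + ∑ i : Fin m, C (a i.succ) * X i.castSucc + C (a 0)) =
      C cl * (X (Fin.last m) + ∑ i : Fin m, C ((φ a) i.succ) * X i.castSucc + C ((φ a) 0)) := by
    intro a
    simp only [map_add, map_sum, map_mul, bind₁_X_right, bind₁_C_right, hφ]
    rw [mul_add, mul_add, Finset.mul_sum]
    refine congrArg₂ (· + ·) ?_ ?_
    · refine congrArg₂ (· + ·) rfl ?_
      refine Finset.sum_congr rfl fun i _ => ?_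
      simp only [hdd, Fin.cases_succ, ← mul_assoc, ← map_mul]
      congr 2
      field_simp
    · simp only [hdd, Fin.cases_zero, ← map_mul]
      congr 1
      field_simp
  calc MvPolynomial.bind₁ (fun v : Fin (m + 1) => C (c v) * X v) P
      = ∏ a : Fin (m+1) → F, MvPolynomial.bind₁ (fun v : Fin (m + 1) => C (c v) * X v)
          (X (Fin.last m) + ∑ i : Fin m, C (a i.succ) * X i.castSucc + C (a 0)) :=
        map_prod _ _ _
    _ = ∏ a : Fin (m+1) → F,
          (C cl * (X (Fin.last m) + ∑ i : Fin m, C ((φ a) i.succ) * X i.castSucc + C ((φ a) 0))) :=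
        Finset.prod_congr rfl fun a _ => key a
    _ = (C cl) ^ Fintype.card (Fin (m+1) → F) * ∏ a : Fin (m+1) → F,
          (X (Fin.last m) + ∑ i : Fin m, C ((φ a) i.succ) * X i.castSucc + C ((φ a) 0)) := by
        rw [Finset.prod_mul_distrib, Finset.prod_const]; rfl
    _ = (C cl) ^ Fintype.card (Fin (m+1) → F) * P := by
        refine congrArg ((C cl) ^ Fintype.card (Fin (m+1) → F) * ·) ?_
        exact Equiv.prod_comp φ (fun b => X (Fin.last m) + ∑ i : Fin m, C (b i.succ) * X i.castSucc + C (b 0))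
    _ = C cl * P := by
        rw [← map_pow, Fintype.card_fun, Fintype.card_fin, FiniteField.pow_card_pow]
end
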